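/- Let G be a group and let * : G × G → G be a binary operation such that the map s : G × G → G × G defined by s(x,y) = (xy, x*y) (where xy is the group multiplication) is a set-theoretical solution of the pentagon equation. Then x*y = y for all x,y ∈ G. -/

import Mathlib

/-- The map acting as `s` on coordinates 1 and 2 of `M × M × M`. -/
def map12 {M : Type*} (s : M × M → M × M) : M × M × M → M × M × M :=
  fun p => ((s (p.1, p.2.1)).1, (s (p.1, p.2.1)).2, p.2.2)

/-- The map acting as `s` on coordinates 1 and 3 of `M × M × M`. -/
def map13 {M : Type*} (s : M × M → M × M) : M × M × M → M × M × M :=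
  fun p => ((s (p.1, p.2.2)).1, p.2.1, (s (p.1, p.2.2)).2)

/-- The map acting as `s` on coordinates 2 and 3 of `M × M × M`. -/
def map23 {M : Type*} (s : M × M → M × M) : M × M × M → M × M × M :=
  fun p => (p.1, s p.2)

/-- if `G` is a group and `s(x,y) = (xy, x*y)` (with `xy` the group
multiplication) is a set-theoretical solution of the pentagon equation, then
`x*y = y` for all `x, y ∈ G`. -/
theorem stmt3 {G : Type*} [Group G] (star : G → G → G)
    (s : G × G → G × G) (hs : ∀ x y : G, s (x, y) = (x * y, star x y))
    (hbij : Function.Bijective s)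
    (hpent : map23 s ∘ map13 s ∘ map12 s = map12 s ∘ map23 s) :
    ∀ x y : G, star x y = y := by
  have pent : ∀ x y z : G,
      star x y * star (x * y) z = star x (y * z) ∧
      star (star x y) (star (x * y) z) = star y z := by
    intro x y z
    have h := congrFun hpent (x, y, z)
    simp only [Function.comp_apply, map12, map13, map23, hs, Prod.mk.injEq] at h
    exact ⟨h.2.1, h.2.2⟩
  -- x * 1 = 1
  have h1 : ∀ x : G, star x 1 = 1 := by
    intro x
    have h := (pent x 1 1).1
    simp only [mul_one] at h
    exact (mul_eq_right).1 h
  -- (1*y)(y*z) = 1*(yz)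
  have h2 : ∀ y z : G, star 1 y * star y z = star 1 (y * z) := by
    intro y z
    have h := (pent 1 y z).1
    simpa using h
  -- 1*(x*z) = 1*z
  have h3 : ∀ x z : G, star 1 (star x z) = star 1 z := by
    intro x z
    have h := (pent x 1 z).2
    rw [h1 x, mul_one] at h
    exact h
  -- injectivity of a ↦ star 1 a
  have ginj : ∀ a b : G, star 1 a = star 1 b → a = b := by
    intro a b h
    have key : ∀ c : G, star c c⁻¹ = (star 1 c)⁻¹ * star 1 1 := by
      intro c
      have := h2 c c⁻¹
      rw [mul_inv_cancel] at this
      rw [← this, inv_mul_cancel_left]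
    have hsab : s (a, a⁻¹) = s (b, b⁻¹) := by
      rw [hs, hs, mul_inv_cancel, mul_inv_cancel, key, key, h]
    have := hbij.1 hsab
    exact (Prod.ext_iff.1 this).1
  intro x y
  exact ginj _ _ (h3 x y)
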